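/- Every language recognized by a pushdown automaton in normal form (each transition pops the top symbol and pushes at most one additional symbol) over an alphabet Σ with stack alphabet Γ and state set Q satisfies the pumping property with pumping constant p = |Q|·(|Γ|+1)^{|Q|²·|Γ|}: every accepted word w with |w| > p factors as w = uvxyz with |vxy| ≤ p, |vy| ≥ 1, and u v^n x y^n z accepted for all n ≥ 0. -/

import Mathlib

/-- A pushdown automaton with state type `Q`, input alphabet `A`, stack alphabet `Γ`.
A transition pops the topmost stack symbol and pushes a string of stack symbols
(head = new top). -/
structure PDA (Q A Γ : Type) where
  init : Q
  startSym : Γ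
  final : Set Q
  trans : Q → Option A → Γ → Set (Q × List Γ)

namespace PDA

variable {Q A Γ : Type}

/-- One step of the automaton: pop the top symbol `Z` and push the string `β`. -/
def Step (M : PDA Q A Γ) (c : Q × List Γ) (a : Option A) (c' : Q × List Γ) : Prop :=
  ∃ Z rest β, c.2 = Z :: rest ∧ (c'.1, β) ∈ M.trans c.1 a Z ∧ c'.2 = β ++ rest

/-- A run of length `m`: a sequence of configurations connected by steps. -/
structure Run (M : PDA Q A Γ) (m : ℕ) where
  conf : ℕ → Q × List Γ
  label : ℕ → Option A
  ok : ∀ t < m, M.Step (conf t) (label t) (conf (t + 1))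

/-- Stack size at time `t`. -/
def Run.s {M : PDA Q A Γ} {m : ℕ} (r : M.Run m) (t : ℕ) : ℕ := (r.conf t).2.length

/-- The input word read between steps `a` (inclusive) and `b` (exclusive). -/
def Run.read {M : PDA Q A Γ} {m : ℕ} (r : M.Run m) (a b : ℕ) : List A :=
  ((List.range' a (b - a)).map r.label).reduceOption

/-- The run is an accepting run for the word `w`. -/
def Run.Accepting {M : PDA Q A Γ} {m : ℕ} (r : M.Run m) (w : List A) : Prop :=
  r.conf 0 = (M.init, [M.startSym]) ∧ (r.conf m).1 ∈ M.final ∧ r.read 0 m = w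

/-- The automaton accepts `w` iff some run accepts it. -/
def Accepts (M : PDA Q A Γ) (w : List A) : Prop := ∃ m, ∃ r : M.Run m, r.Accepting w

/-- Normal form: every transition pops the top symbol and pushes either nothing or
the popped symbol together with exactly one additional symbol. -/
def NormalForm (M : PDA Q A Γ) : Prop :=
  ∀ q a Z q' β, (q', β) ∈ M.trans q a Z → β = [] ∨ ∃ Y, β = [Y, Z]

/-- `(i, j, k)` is an `N`-level of the run `r`. -/
def Run.IsLevel {M : PDA Q A Γ} {m : ℕ} (r : M.Run m) (N i j k : ℕ) : Prop :=
  i < j ∧ j < k ∧ k ≤ m ∧ r.s i = r.s k ∧ r.s j = r.s i + N ∧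
    (∀ n, i ≤ n → n ≤ j → r.s i ≤ r.s n ∧ r.s n ≤ r.s j) ∧
    (∀ n, j ≤ n → n ≤ k → r.s k ≤ r.s n ∧ r.s n ≤ r.s j)

/-- The run has an `N`-level. -/
def Run.HasLevel {M : PDA Q A Γ} {m : ℕ} (r : M.Run m) (N : ℕ) : Prop :=
  ∃ i j k, r.IsLevel N i j k

/-- The level of the run is `l`: the maximal `N` such that the run has an `N`-level. -/
def Run.LevelIs {M : PDA Q A Γ} {m : ℕ} (r : M.Run m) (l : ℕ) : Prop :=
  r.HasLevel l ∧ ∀ N, r.HasLevel N → N ≤ l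

/-- `lp(h)`: the last time `≤ j` at which the stack has size `h`. -/
noncomputable def Run.lp {M : PDA Q A Γ} {m : ℕ} (r : M.Run m) (j h : ℕ) : ℕ :=
  sSup {y | y ≤ j ∧ r.s y = h}

/-- `fp(h)`: the first time `≥ j` at which the stack has size `h`. -/
noncomputable def Run.fp {M : PDA Q A Γ} {m : ℕ} (r : M.Run m) (j h : ℕ) : ℕ :=
  sInf {y | j ≤ y ∧ r.s y = h}

/-- The full state of a stack size `h` (relative to the middle index `j` of a level):
the state at `lp(h)`, the top stack symbol at `lp(h)`, and the state at `fp(h)`. -/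
noncomputable def Run.fullState {M : PDA Q A Γ} {m : ℕ} (r : M.Run m) (j h : ℕ) : Q × Option Γ × Q :=
  ((r.conf (r.lp j h)).1, (r.conf (r.lp j h)).2.head?, (r.conf (r.fp j h)).1)

/-- Extended configuration: the state together with the top `l` stack symbols,
padded with blanks (`none`) if the stack has fewer than `l` symbols. -/
def Run.extConf {M : PDA Q A Γ} {m : ℕ} (r : M.Run m) (l t : ℕ) : Q × List (Option Γ) :=
  ((r.conf t).1, ((r.conf t).2.map some ++ List.replicate l none).take l)

end PDA

/-- `n`-fold concatenation of a word. -/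
def wpow {A : Type} (v : List A) (n : ℕ) : List A := (List.replicate n v).flatten

namespace PP
open PDA

variable {Q A Γ : Type} {M : PDA Q A Γ}

theorem wpow_zero {v : List A} : wpow v 0 = [] := by simp [wpow]

theorem wpow_succ {v : List A} {n : ℕ} : wpow v (n+1) = v ++ wpow v n := by
  simp [wpow, List.replicate_succ]

theorem wpow_succ' {v : List A} {n : ℕ} : wpow v (n+1) = wpow v n ++ v := by
  simp [wpow, List.replicate_succ']

theorem range'_append_old (s m n step : ℕ) :
    List.range' s m step ++ List.range' (s + step * m) n step = List.range' s (n + m) step := by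
  rw [Nat.add_comm n m]; exact List.range'_append

theorem range'_eq_map_range_old (s n : ℕ) :
    List.range' s n = List.map (fun x => s + x) (List.range n) := List.range'_eq_map_range

/-! ### read lemmas -/

theorem read_split {m : ℕ} (r : M.Run m) {a b c : ℕ} (hab : a ≤ b) (hbc : b ≤ c) :
    r.read a c = r.read a b ++ r.read b c := by
  have h1 : a + 1*(b-a) = b := by omega
  have h2 : (c-b)+(b-a) = c - a := by omega
  have := range'_append_old a (b-a) (c-b) 1
  rw [h1, h2] at this
  unfold Run.read
  rw [← this, List.map_append, List.reduceOption_append]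

theorem read_self {m : ℕ} (r : M.Run m) (a : ℕ) : r.read a a = [] := by
  simp [Run.read, Nat.sub_self]

theorem read_one {m : ℕ} (r : M.Run m) (t : ℕ) : r.read t (t+1) = (r.label t).toList := by
  have : t + 1 - t = 1 := by omega
  simp only [Run.read, this, List.range'_one, List.map_cons, List.map_nil]
  cases r.label t <;> simp [List.reduceOption]

theorem read_len {m : ℕ} (r : M.Run m) (a b : ℕ) : (r.read a b).length ≤ b - a := by
  calc (r.read a b).length ≤ ((List.range' a (b-a)).map r.label).length :=
        List.reduceOption_length_le _
    _ = b - a := by simp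

theorem read_pos {m : ℕ} (r : M.Run m) {τ b : ℕ} (h : τ < b) (hs : (r.label τ).isSome) :
    1 ≤ (r.read τ b).length := by
  rw [read_split r (Nat.le_succ τ) h, read_one]
  rcases Option.isSome_iff_exists.mp hs with ⟨x, hx⟩
  simp [hx]

/-! ### ReachL -/

def ReachL (M : PDA Q A Γ) (n : ℕ) (c c' : Q × List Γ) (w : List A) : Prop :=
  ∃ r : M.Run n, r.conf 0 = c ∧ r.conf n = c' ∧ r.read 0 n = w

def Reach (M : PDA Q A Γ) (c c' : Q × List Γ) (w : List A) : Prop :=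
  ∃ n, ReachL M n c c' w

theorem ReachL.refl (M : PDA Q A Γ) (c : Q × List Γ) : ReachL M 0 c c [] :=
  ⟨⟨fun _ => c, fun _ => none, fun t ht => absurd ht (Nat.not_lt_zero t)⟩, rfl, rfl, by
    simp [Run.read]⟩

theorem Reach.refl (M : PDA Q A Γ) (c : Q × List Γ) : Reach M c c [] := ⟨0, ReachL.refl M c⟩

theorem ReachL.trans {n n' : ℕ} {c c' c'' : Q × List Γ} {w w' : List A}
    (h1 : ReachL M n c c' w) (h2 : ReachL M n' c' c'' w') :
    ReachL M (n + n') c c'' (w ++ w') := by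
  obtain ⟨r1, hr10, hr1n, hr1w⟩ := h1
  obtain ⟨r2, hr20, hr2n, hr2w⟩ := h2
  refine ⟨⟨fun t => if t < n then r1.conf t else r2.conf (t - n),
          fun t => if t < n then r1.label t else r2.label (t - n), ?_⟩, ?_, ?_, ?_⟩
  · intro t ht
    by_cases h : t < n
    · by_cases h' : t + 1 < n
      · simpa [h, h'] using r1.ok t h
      · have ht1 : t + 1 = n := by omega
        have hstep := r1.ok t h
        rw [if_pos h, if_pos h, if_neg (show ¬ t + 1 < n by omega),
          show t + 1 - n = 0 by omega, hr20, ← hr1n]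
        rw [ht1] at hstep
        exact hstep
    · have h2t : t - n < n' := by omega
      have := r2.ok (t - n) h2t
      have e : t + 1 - n = t - n + 1 := by omega
      simpa [h, show ¬ t + 1 < n by omega, e] using this
  · by_cases h : 0 < n
    · simpa [h] using hr10
    · have hn : n = 0 := by omega
      subst hn
      dsimp only
      rw [if_neg h, Nat.sub_zero, hr20, ← hr1n, hr10]
  · simp only [show ¬ (n + n' < n) by omega, if_neg, Nat.add_sub_cancel_left]
    simpa using hr2n
  · have hsplit : List.range' 0 (n + n' - 0) = List.range' 0 n ++ List.range' n n' := by
      have := range'_append_old 0 n n' 1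
      simp only [Nat.zero_add, Nat.one_mul] at this
      rw [Nat.sub_zero, Nat.add_comm n n']
      exact this.symm
    unfold Run.read
    rw [hsplit, List.map_append, List.reduceOption_append]
    congr 1
    · rw [← hr1w]
      unfold Run.read
      congr 1
      apply List.map_congr_left
      intro t ht
      have : t < n := by simpa using (List.mem_range'_1.mp ht).2
      simp [this]
    · rw [← hr2w]
      unfold Run.read
      rw [Nat.sub_zero, range'_eq_map_range_old n n', range'_eq_map_range_old 0 n']
      simp only [List.map_map]
      congr 1
      apply List.map_congr_left
      intro t ht
      have : ¬ (n + t < n) := by omega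
      simp [Function.comp, this]

theorem Reach.trans {c c' c'' : Q × List Γ} {w w' : List A}
    (h1 : Reach M c c' w) (h2 : Reach M c' c'' w') : Reach M c c'' (w ++ w') := by
  obtain ⟨n, h1⟩ := h1; obtain ⟨n', h2⟩ := h2; exact ⟨n + n', h1.trans h2⟩

/-- restriction of a run to `[a,b]` -/
def Run.restrict {m : ℕ} (r : M.Run m) (a b : ℕ) (hbm : b ≤ m) : M.Run (b - a) :=
  ⟨fun t => r.conf (a + t), fun t => r.label (a + t), by
    intro t ht
    have : a + t < m := by omega
    simpa [Nat.add_assoc] using r.ok (a + t) this⟩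

theorem restrict_conf {m : ℕ} (r : M.Run m) (a b : ℕ) (hbm : b ≤ m) (t : ℕ) :
    (Run.restrict r a b hbm).conf t = r.conf (a + t) := rfl

theorem restrict_s {m : ℕ} (r : M.Run m) (a b : ℕ) (hbm : b ≤ m) (t : ℕ) :
    (Run.restrict r a b hbm).s t = r.s (a + t) := rfl

theorem restrict_read {m : ℕ} (r : M.Run m) {a b : ℕ} (hab : a ≤ b) (hbm : b ≤ m) :
    (Run.restrict r a b hbm).read 0 (b - a) = r.read a b := by
  unfold Run.read
  congr 1
  rw [range'_eq_map_range_old 0 (b - a - 0), range'_eq_map_range_old a (b - a)]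
  simp only [Nat.sub_zero, List.map_map]
  simp [Function.comp, Run.restrict]

theorem reach_of_run {m : ℕ} (r : M.Run m) {a b : ℕ} (hab : a ≤ b) (hbm : b ≤ m) :
    ReachL M (b - a) (r.conf a) (r.conf b) (r.read a b) := by
  refine ⟨Run.restrict r a b hbm, by simp [restrict_conf], ?_, restrict_read r hab hbm⟩
  rw [restrict_conf, show a + (b - a) = b by omega]

/-! ### heights -/

theorem s_pos {m : ℕ} (r : M.Run m) {t : ℕ} (ht : t < m) : 1 ≤ r.s t := by
  obtain ⟨Z, rest, β, hc, -, -⟩ := r.ok t ht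
  simp [Run.s, hc]

theorem s_step (hnf : M.NormalForm) {m : ℕ} (r : M.Run m) {t : ℕ} (ht : t < m) :
    r.s (t+1) = r.s t + 1 ∨ r.s (t+1) + 1 = r.s t := by
  obtain ⟨Z, rest, β, hc, htr, hc'⟩ := r.ok t ht
  rcases hnf _ _ _ _ _ htr with hβ | ⟨Y, hβ⟩
  · right; subst hβ; simp [Run.s, hc, hc']
  · left; subst hβ; simp [Run.s, hc, hc']

/-! ### replay -/

theorem replay {m : ℕ} (r : M.Run m) (k : ℕ) (hk : ∀ t ≤ m, k < r.s t) (ρ' : List Γ) :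
    ∃ r' : M.Run m, (∀ t, t ≤ m → r'.conf t = ((r.conf t).1, (r.conf t).2.take (r.s t - k) ++ ρ'))
      ∧ r'.label = r.label := by
  refine ⟨⟨fun t => ((r.conf t).1, (r.conf t).2.take (r.s t - k) ++ ρ'), r.label, ?_⟩,
    fun t _ => rfl, rfl⟩
  intro t ht
  obtain ⟨Z, rest, β, hc, htr, hc'⟩ := r.ok t ht
  refine ⟨Z, rest.take (r.s t - 1 - k) ++ ρ', β, ?_, htr, ?_⟩
  · dsimp only
    rw [hc]
    have h1 : r.s t - k = (r.s t - 1 - k) + 1 := by have := hk t (le_of_lt ht); omega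
    rw [h1, List.take_succ_cons, List.cons_append]
  · dsimp only
    rw [hc']
    have hst : r.s t = rest.length + 1 := by simp [Run.s, hc]
    have hst1 : r.s (t+1) = β.length + rest.length := by simp [Run.s, hc']
    have h2 : r.s (t+1) - k = β.length + (r.s t - 1 - k) := by
      have := hk t (le_of_lt ht); have := hk (t+1) (by omega); omega
    rw [h2, List.take_length_add_append, List.append_assoc]

theorem read_label_congr {n : ℕ} (r r' : M.Run n) (h : r'.label = r.label) (a b : ℕ) :
    r'.read a b = r.read a b := by simp [Run.read, h]

theorem reach_replay {m : ℕ} (r : M.Run m) {a b : ℕ} (hab : a ≤ b) (hbm : b ≤ m)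
    (k : ℕ) (hk : ∀ t, a ≤ t → t ≤ b → k < r.s t) (ρ' : List Γ) :
    ReachL M (b - a) ((r.conf a).1, (r.conf a).2.take (r.s a - k) ++ ρ')
      ((r.conf b).1, (r.conf b).2.take (r.s b - k) ++ ρ') (r.read a b) := by
  obtain ⟨r', hconf, hlab⟩ := replay (Run.restrict r a b hbm) k
    (fun t ht => by rw [restrict_s]; exact hk (a + t) (by omega) (by omega)) ρ'
  refine ⟨r', ?_, ?_, ?_⟩
  · rw [hconf 0 (by omega), restrict_conf, restrict_s, Nat.add_zero]
  · rw [hconf (b - a) (le_refl _), restrict_conf, restrict_s, show a + (b - a) = b by omega]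
  · rw [read_label_congr (Run.restrict r a b hbm) r' hlab, restrict_read r hab hbm]

/-! ### stack suffix preservation -/

theorem suffix_inert {m : ℕ} (r : M.Run m) (k : ℕ) {a b : ℕ} (hab : a ≤ b) (hbm : b ≤ m)
    (hk : ∀ t, a ≤ t → t ≤ b → k < r.s t) :
    (r.conf b).2.drop (r.s b - k) = (r.conf a).2.drop (r.s a - k) := by
  induction b, hab using Nat.le_induction with
  | base => rfl
  | succ b hab ih =>
    have ih := ih (by omega) (fun t h1 h2 => hk t h1 (by omega))
    obtain ⟨Z, rest, β, hc, htr, hc'⟩ := r.ok b (by omega)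
    rw [← ih, hc, hc']
    have h1 : k < r.s b := hk b (by omega) (by omega)
    have h2 : k < r.s (b+1) := hk (b+1) (by omega) (le_refl _)
    have hsb : r.s b = rest.length + 1 := by simp [Run.s, hc]
    have hsb1 : r.s (b+1) = β.length + rest.length := by simp [Run.s, hc']
    rw [show r.s b - k = (r.s b - 1 - k) + 1 by omega, List.drop_succ_cons]
    rw [show r.s (b+1) - k = β.length + (r.s b - 1 - k) by omega, List.drop_length_add_append]

theorem bottom_preserve (hnf : M.NormalForm) {m : ℕ} (r : M.Run m) (h : ℕ) {a b : ℕ}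
    (hab : a ≤ b) (hbm : b ≤ m) (hk : ∀ t, a ≤ t → t ≤ b → h ≤ r.s t) :
    (r.conf b).2.drop (r.s b - h) = (r.conf a).2.drop (r.s a - h) := by
  induction b, hab using Nat.le_induction with
  | base => rfl
  | succ b hab ih =>
    have ih := ih (by omega) (fun t h1 h2 => hk t h1 (by omega))
    obtain ⟨Z, rest, β, hc, htr, hc'⟩ := r.ok b (by omega)
    have h1 : h ≤ r.s b := hk b (by omega) (by omega)
    have h2 : h ≤ r.s (b+1) := hk (b+1) (by omega) (le_refl _)
    have hsb : r.s b = rest.length + 1 := by simp [Run.s, hc]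
    rw [← ih, hc, hc']
    rcases hnf _ _ _ _ _ htr with hβ | ⟨Y, hβ⟩ <;> subst hβ
    · have hsb1 : r.s (b+1) = rest.length := by simp [Run.s, hc']
      rw [show r.s b - h = (r.s b - 1 - h) + 1 by omega, List.drop_succ_cons,
        List.nil_append]
      congr 1
      omega
    · have hsb1 : r.s (b+1) = rest.length + 2 := by simp [Run.s, hc']
      have : ([Y, Z] ++ rest : List Γ) = Y :: (Z :: rest) := rfl
      rw [this, show r.s (b+1) - h = (r.s b - h) + 1 by omega, List.drop_succ_cons]

/-! ### discrete IVT -/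

theorem ivt_up (hnf : M.NormalForm) {m : ℕ} (r : M.Run m) {a b h : ℕ} (hab : a ≤ b)
    (hbm : b ≤ m) (h1 : r.s a ≤ h) (h2 : h ≤ r.s b) : ∃ t, a ≤ t ∧ t ≤ b ∧ r.s t = h := by
  induction b, hab using Nat.le_induction with
  | base => exact ⟨a, le_refl _, le_refl _, le_antisymm h1 h2⟩
  | succ b hab ih =>
    by_cases hc : h ≤ r.s b
    · obtain ⟨t, h3, h4, h5⟩ := ih (by omega) hc
      exact ⟨t, h3, by omega, h5⟩
    · push_neg at hc
      rcases s_step hnf r (show b < m by omega) with hs | hs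
      · exact ⟨b+1, by omega, le_refl _, by omega⟩
      · omega

theorem ivt_down (hnf : M.NormalForm) {m : ℕ} (r : M.Run m) {a b h : ℕ} (hab : a ≤ b)
    (hbm : b ≤ m) (h1 : h ≤ r.s a) (h2 : r.s b ≤ h) : ∃ t, a ≤ t ∧ t ≤ b ∧ r.s t = h := by
  induction b, hab using Nat.le_induction with
  | base => exact ⟨a, le_refl _, le_refl _, le_antisymm h2 h1⟩
  | succ b hab ih =>
    by_cases hc : r.s b ≤ h
    · obtain ⟨t, h3, h4, h5⟩ := ih (by omega) hc
      exact ⟨t, h3, by omega, h5⟩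
    · push_neg at hc
      rcases s_step hnf r (show b < m by omega) with hs | hs
      · omega
      · exact ⟨b+1, by omega, le_refl _, by omega⟩



theorem ReachL.accepts {n : ℕ} {σ : List Γ} {qf : Q} {w : List A}
    (h : ReachL M n (M.init, [M.startSym]) (qf, σ) w) (hf : qf ∈ M.final) :
    M.Accepts w := by
  obtain ⟨r, h0, hn, hw⟩ := h
  exact ⟨n, r, h0, by rw [hn]; exact hf, hw⟩

theorem Reach.accepts {σ : List Γ} {qf : Q} {w : List A}
    (h : Reach M (M.init, [M.startSym]) (qf, σ) w) (hf : qf ∈ M.final) :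
    M.Accepts w := by
  obtain ⟨n, h⟩ := h; exact h.accepts hf

end PP

namespace PP2
open PDA PP
variable {Q A Γ : Type} {M : PDA Q A Γ}

/-! ### counting reading steps -/

def RT {m : ℕ} (r : M.Run m) (a b : ℕ) : Finset ℕ :=
  (Finset.Ico a b).filter (fun t => (r.label t).isSome)

theorem read_card {m : ℕ} (r : M.Run m) {a b : ℕ} (hab : a ≤ b) :
    (r.read a b).length = (RT r a b).card := by
  induction b, hab using Nat.le_induction with
  | base => simp [read_self, RT]
  | succ b hab ih =>
    rw [read_split r hab (by omega), List.length_append, ih, read_one]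
    have hins : Finset.Ico a (b+1) = insert b (Finset.Ico a b) :=
      Nat.Ico_succ_right_eq_insert_Ico hab
    conv_rhs => rw [RT, hins, Finset.filter_insert]
    by_cases hb : (r.label b).isSome
    · rw [if_pos hb, Finset.card_insert_of_notMem (by simp [Finset.mem_filter])]
      obtain ⟨x, hx⟩ := Option.isSome_iff_exists.mp hb
      simp [hx, RT]
    · rw [if_neg hb]
      have : r.label b = none := Option.not_isSome_iff_eq_none.mp hb
      simp [this, RT]

theorem pair_select {m : ℕ} (r : M.Run m) {lo hi : ℕ} (hhi : lo ≤ hi)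
    {F : Type} [Fintype F] [DecidableEq F] (φ : ℕ → F)
    (hcard : Fintype.card F < (r.read lo hi).length) :
    ∃ τ τ', lo ≤ τ ∧ τ < τ' ∧ τ' < hi ∧ (r.label τ).isSome = true ∧ φ τ = φ τ' ∧
      (r.read τ τ').length ≤ Fintype.card F := by
  classical
  set S := RT r lo hi with hS
  have hN : Fintype.card F < S.card := by rw [← read_card r hhi]; exact hcard
  have hle : Fintype.card F + 1 ≤ S.card := hN
  set emb := S.orderEmbOfFin rfl with hemb
  have hmem : ∀ k : Fin S.card, emb k ∈ S := fun k => Finset.orderEmbOfFin_mem S rfl k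
  have hrange : ∀ x ∈ S, ∃ k : Fin S.card, emb k = x := by
    intro x hx
    have : (x : ℕ) ∈ Set.range ⇑emb := by
      rw [hemb, Finset.range_orderEmbOfFin]; exact hx
    exact this
  obtain ⟨i, j, hlt, hfeq⟩ : ∃ i j : Fin (Fintype.card F + 1), i < j ∧
      φ (emb (Fin.castLE hle i)) = φ (emb (Fin.castLE hle j)) := by
    obtain ⟨i, j, hij, hfeq⟩ := Fintype.exists_ne_map_eq_of_card_lt
      (fun i : Fin (Fintype.card F + 1) => φ (emb (Fin.castLE hle i)))
      (by simp)
    rcases lt_or_gt_of_ne hij with h | h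
    exacts [⟨i, j, h, hfeq⟩, ⟨j, i, h, hfeq.symm⟩]
  set i' := Fin.castLE hle i with hi'
  set j' := Fin.castLE hle j with hj'
  have hij' : i' < j' := hlt
  set τ := emb i' with hτ
  set τ' := emb j' with hτ'
  have hτS : τ ∈ S := hmem i'
  have hτS' := Finset.mem_filter.mp hτS
  have hτIco := Finset.mem_Ico.mp hτS'.1
  have hτ'S : τ' ∈ S := hmem j'
  have hτ'Ico := Finset.mem_Ico.mp (Finset.mem_filter.mp hτ'S).1
  have hττ' : τ < τ' := emb.lt_iff_lt.mpr hij'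
  refine ⟨τ, τ', hτIco.1, hττ', hτ'Ico.2, hτS'.2, hfeq, ?_⟩
  rw [read_card r (le_of_lt hττ')]
  have hsub : RT r τ τ' ⊆
      (Finset.univ.filter (fun k : Fin S.card => i' ≤ k ∧ k < j')).image emb := by
    intro x hx
    have hx1 := Finset.mem_filter.mp hx
    have hxIco := Finset.mem_Ico.mp hx1.1
    have hlox : lo ≤ x := le_trans hτIco.1 hxIco.1
    have hxhi : x < hi := lt_trans hxIco.2 hτ'Ico.2
    have hxS : x ∈ S := by
      rw [hS, RT]
      exact Finset.mem_filter.mpr ⟨Finset.mem_Ico.mpr ⟨hlox, hxhi⟩, hx1.2⟩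
    obtain ⟨k, hk⟩ := hrange x hxS
    have hk1 : i' ≤ k := by rw [← emb.le_iff_le, hk]; exact hxIco.1
    have hk2 : k < j' := by rw [← emb.lt_iff_lt, hk]; exact hxIco.2
    exact Finset.mem_image.mpr ⟨k, Finset.mem_filter.mpr ⟨Finset.mem_univ _, hk1, hk2⟩, hk⟩
  have h1 : (RT r τ τ').card ≤
      (Finset.univ.filter (fun k : Fin S.card => i' ≤ k ∧ k < j')).card :=
    le_trans (Finset.card_le_card hsub) Finset.card_image_le
  have h2 : (Finset.univ.filter (fun k : Fin S.card => i' ≤ k ∧ k < j')) =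
      Finset.Ico i' j' := by
    ext k; simp [Finset.mem_Ico]
  rw [h2, Fin.card_Ico] at h1
  have hjv : (j' : ℕ) ≤ Fintype.card F := by
    have := j.isLt
    have : (j' : ℕ) = (j : ℕ) := Fin.coe_castLE hle j
    omega
  omega


theorem wpow_nil {n : ℕ} : wpow ([] : List A) n = [] := by
  induction n with
  | zero => simp [wpow]
  | succ n ih => rw [wpow_succ, ih]; rfl

theorem Reach.accepts' {c : Q × List Γ} {w : List A}
    (h : Reach M (M.init, [M.startSym]) c w) (hf : c.1 ∈ M.final) : M.Accepts w := by
  obtain ⟨n, r, h0, hn, hw⟩ := h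
  exact ⟨n, r, h0, by rw [hn]; exact hf, hw⟩

theorem accepting_of_reachL {n : ℕ} {cm : Q × List Γ} {w : List A}
    (h : ReachL M n (M.init, [M.startSym]) cm w) (hf : cm.1 ∈ M.final) :
    ∃ r : M.Run n, r.Accepting w := by
  obtain ⟨r, h0, hn, hw⟩ := h
  exact ⟨r, h0, by rw [hn]; exact hf, hw⟩

/-! ### pump cores -/

theorem loop_pump {c : Q × List Γ} {v : List A} (H : Reach M c c v) :
    ∀ n, Reach M c c (wpow v n) := by
  intro n
  induction n with
  | zero => rw [wpow_zero]; exact Reach.refl M c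
  | succ n ih => rw [wpow_succ]; exact H.trans ih

theorem stair_pump {q : Q} {δ β : List Γ} {v : List A}
    (Hv : ∀ ρ : List Γ, Reach M (q, δ ++ ρ) (q, δ ++ (β ++ ρ)) v) :
    ∀ n (ρ : List Γ), Reach M (q, δ ++ ρ) (q, δ ++ (wpow β n ++ ρ)) (wpow v n) := by
  intro n
  induction n with
  | zero => intro ρ; rw [wpow_zero, wpow_zero, List.nil_append]; exact Reach.refl M _
  | succ n ih =>
    intro ρ
    have h1 := Hv ρ
    have h2 := ih (β ++ ρ)
    have h3 := h1.trans h2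
    rw [wpow_succ (v := v)]
    rw [wpow_succ' (v := β)]
    simpa [List.append_assoc] using h3

theorem pocket_pump {q q' : Q} {X : Γ} {γt : List Γ} {v x y : List A}
    (Hv : ∀ ρ : List Γ, Reach M (q, X::ρ) (q, X :: (γt ++ (X::ρ))) v)
    (Hx : ∀ ρ : List Γ, Reach M (q, X::ρ) (q', X::ρ) x)
    (Hy : ∀ ρ : List Γ, Reach M (q', X :: (γt ++ (X::ρ))) (q', X::ρ) y) :
    ∀ n (ρ : List Γ), Reach M (q, X::ρ) (q', X::ρ) (wpow v n ++ x ++ wpow y n) := by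
  intro n
  induction n with
  | zero => intro ρ; simpa [wpow_zero] using Hx ρ
  | succ n ih =>
    intro ρ
    have h1 := Hv ρ
    have h2 := ih (γt ++ (X::ρ))
    have h3 := Hy ρ
    have h4 := (h1.trans h2).trans h3
    have heq : wpow v (n+1) ++ x ++ wpow y (n+1) =
        v ++ (wpow v n ++ x ++ wpow y n) ++ y := by
      rw [wpow_succ (v := v), wpow_succ' (v := y)]
      simp [List.append_assoc]
    rw [heq]
    exact h4

/-! ### packaging a loop pump -/

theorem loop_package {m : ℕ} {r : M.Run m} {w : List A} (hacc : r.Accepting w)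
    {τ τ' : ℕ} (hττ' : τ < τ') (hτ'm : τ' ≤ m) (hconf : r.conf τ = r.conf τ')
    {P : ℕ} (hlen1 : 1 ≤ (r.read τ τ').length) (hlenp : (r.read τ τ').length ≤ P) :
    ∃ u v x y z : List A, w = u ++ v ++ x ++ y ++ z ∧
      (v ++ x ++ y).length ≤ P ∧ 1 ≤ (v ++ y).length ∧
      ∀ n : ℕ, M.Accepts (u ++ wpow v n ++ x ++ wpow y n ++ z) := by
  obtain ⟨hr0, hrf, hrw⟩ := hacc
  have hτm : τ ≤ m := le_trans (le_of_lt hττ') hτ'm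
  refine ⟨r.read 0 τ, r.read τ τ', [], [], r.read τ' m, ?_, by simpa using hlenp,
    by simpa using hlen1, ?_⟩
  · rw [← hrw, read_split r (Nat.zero_le τ) hτm, read_split r (le_of_lt hττ') hτ'm]
    simp
  · intro n
    have Hu : ReachL M τ (r.conf 0) (r.conf τ) (r.read 0 τ) := by
      simpa using reach_of_run r (Nat.zero_le τ) hτm
    have Hv : ReachL M (τ' - τ) (r.conf τ) (r.conf τ) (r.read τ τ') := by
      have := reach_of_run r (le_of_lt hττ') hτ'm
      rwa [← hconf] at this
    have Hz : ReachL M (m - τ') (r.conf τ) (r.conf m) (r.read τ' m) := by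
      have := reach_of_run r hτ'm (le_refl m)
      rwa [← hconf] at this
    have hpump := loop_pump ⟨_, Hv⟩ n
    have hall := (Reach.trans ⟨_, Hu⟩ hpump).trans ⟨_, Hz⟩
    rw [hr0] at hall
    have := Reach.accepts' hall hrf
    rw [wpow_nil]
    simpa [List.append_assoc] using this

/-! ### encoding of short stacks -/

def enc (d : Γ) (K' : ℕ) (δ : List Γ) : Γ × (Fin K' → Option Γ) :=
  (δ.head?.getD d, fun i => δ.tail[i.val]?)

theorem enc_inj (d : Γ) {K' : ℕ} {δ δ' : List Γ} (h1 : δ ≠ []) (h2 : δ' ≠ [])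
    (hl1 : δ.length ≤ K' + 1) (hl2 : δ'.length ≤ K' + 1)
    (he : enc d K' δ = enc d K' δ') : δ = δ' := by
  obtain ⟨a, l, rfl⟩ : ∃ a l, δ = a :: l := by
    cases δ with
    | nil => exact absurd rfl h1
    | cons a l => exact ⟨a, l, rfl⟩
  obtain ⟨a', l', rfl⟩ : ∃ a l, δ' = a :: l := by
    cases δ' with
    | nil => exact absurd rfl h2
    | cons a l => exact ⟨a, l, rfl⟩
  obtain ⟨hh, ht⟩ := Prod.mk.injEq .. ▸ he
  simp only [enc, List.head?_cons, Option.getD_some, List.tail_cons] at hh ht ⊢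
  subst hh
  congr 1
  apply List.ext_getElem?
  intro n
  by_cases hn : n < K'
  · exact congrFun ht ⟨n, hn⟩
  · have hlen1 : l.length ≤ K' := by simpa using hl1
    have hlen2 : l'.length ≤ K' := by simpa using hl2
    rw [List.getElem?_eq_none (by omega), List.getElem?_eq_none (by omega)]


/-- future minimum of the stack height -/
noncomputable def fm {m : ℕ} (r : M.Run m) (t : ℕ) : ℕ :=
  sInf {v | ∃ u, t ≤ u ∧ u ≤ m ∧ r.s u = v}

theorem fm_mem {m : ℕ} (r : M.Run m) {t : ℕ} (ht : t ≤ m) :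
    ∃ u, t ≤ u ∧ u ≤ m ∧ r.s u = fm r t := by
  have hne' : {v | ∃ u, t ≤ u ∧ u ≤ m ∧ r.s u = v}.Nonempty := ⟨r.s t, t, le_refl t, ht, rfl⟩
  obtain ⟨u, h1, h2, h3⟩ := Nat.sInf_mem hne'
  exact ⟨u, h1, h2, h3⟩

theorem fm_le {m : ℕ} (r : M.Run m) {t u : ℕ} (h1 : t ≤ u) (h2 : u ≤ m) :
    fm r t ≤ r.s u := Nat.sInf_le ⟨u, h1, h2, rfl⟩

/-! ### main case 1 : no big excursion -/

theorem no_excursion_case [Fintype Q] [Fintype Γ] {m : ℕ} {r : M.Run m} {w : List A}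
    (hnf : M.NormalForm) (hacc : r.Accepting w) {K P : ℕ} (hK : 1 ≤ K)
    (hcardF : Fintype.card (Q × Γ × (Fin (K-1) → Option Γ)) < P)
    (hlen : P < w.length)
    (hne : ∀ t u, t ≤ u → u ≤ m → 1 ≤ r.s u → r.s t < r.s u + K) :
    ∃ u v x y z : List A, w = u ++ v ++ x ++ y ++ z ∧
      (v ++ x ++ y).length ≤ P ∧ 1 ≤ (v ++ y).length ∧
      ∀ n : ℕ, M.Accepts (u ++ wpow v n ++ x ++ wpow y n ++ z) := by
  classical
  obtain ⟨hr0, hrf, hrw⟩ := hacc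
  set d0 := M.startSym with hd0
  have hreadlen : P < (r.read 0 m).length := by rw [hrw]; exact hlen
  have hs0 : r.s 0 = 1 := by simp [Run.s, hr0]
  rcases Nat.eq_zero_or_pos (r.s m) with hsm | hsm
  · -- final stack empty : stacks stay below K, configurations repeat exactly
    have hm1 : 1 ≤ m := by
      rcases Nat.eq_zero_or_pos m with h | h
      · exfalso; subst h; omega
      · exact h
    have hs1 : r.s (m-1) = 1 := by
      obtain ⟨Z, rest, β, hc, htr, hc'⟩ := r.ok (m-1) (by omega)
      rw [show m - 1 + 1 = m by omega] at hc'
      have h0 : (r.conf m).2.length = 0 := hsm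
      rw [hc'] at h0
      simp only [List.length_append] at h0
      have : rest.length = 0 := by omega
      simp [Run.s, hc, this]
    have hbound : ∀ t, t < m → r.s t ≤ K := by
      intro t ht
      have := hne t (m-1) (by omega) (by omega) (by rw [hs1])
      omega
    have hcard' : Fintype.card (Q × Γ × (Fin (K-1) → Option Γ)) < (r.read 0 m).length := by
      omega
    obtain ⟨τ, τ', hloτ, hττ', hτ'hi, hsome, hφeq, hrlen⟩ :=
      pair_select r (Nat.zero_le m)
        (fun t => ((r.conf t).1, enc d0 (K-1) (r.conf t).2)) hcard'
    have hφeq' : ((r.conf τ).1, enc d0 (K-1) (r.conf τ).2)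
        = ((r.conf τ').1, enc d0 (K-1) (r.conf τ').2) := hφeq
    obtain ⟨hst, henc⟩ := Prod.mk.injEq .. ▸ hφeq'

    have hne1 : (r.conf τ).2 ≠ [] := by
      have := s_pos r (lt_trans hττ' hτ'hi)
      exact List.ne_nil_of_length_pos (by simp only [Run.s] at this; omega)
    have hne2 : (r.conf τ').2 ≠ [] := by
      have := s_pos r hτ'hi
      exact List.ne_nil_of_length_pos (by simp only [Run.s] at this; omega)
    have hl1 : (r.conf τ).2.length ≤ (K-1) + 1 := by
      have := hbound τ (lt_trans hττ' hτ'hi); simp only [Run.s] at this; omega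
    have hl2 : (r.conf τ').2.length ≤ (K-1) + 1 := by
      have := hbound τ' hτ'hi; simp only [Run.s] at this; omega
    have hstk : (r.conf τ).2 = (r.conf τ').2 := enc_inj d0 hne1 hne2 hl1 hl2 henc
    have hconf : r.conf τ = r.conf τ' := Prod.ext hst hstk
    exact loop_package ⟨hr0, hrf, hrw⟩ hττ' (le_of_lt hτ'hi) hconf
      (read_pos r hττ' hsome) (le_trans hrlen (le_of_lt hcardF))
  · -- final stack nonempty: stair pump via future minima
    set fmin : ℕ → ℕ := fun t => fm r t with hfmin
    have hfle : ∀ t u, t ≤ u → u ≤ m → fmin t ≤ r.s u := by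
      intro t u h1 h2; exact fm_le r h1 h2
    have hf1 : ∀ t, t ≤ m → 1 ≤ fmin t := by
      intro t ht
      obtain ⟨u, h1, h2, h3⟩ := fm_mem r ht
      show 1 ≤ fm r t
      rw [← h3]
      rcases Nat.lt_or_ge u m with h | h
      · exact s_pos r h
      · have : u = m := by omega
        rw [this]; exact hsm
    have hfK : ∀ t, t ≤ m → r.s t < fmin t + K := by
      intro t ht
      obtain ⟨u, h1, h2, h3⟩ := fm_mem r ht
      have h4 : 1 ≤ r.s u := by rw [h3]; exact hf1 t ht
      have h5 := hne t u h1 h2 h4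
      show r.s t < fm r t + K
      omega
    have hfmono : ∀ t t', t ≤ t' → t' ≤ m → fmin t ≤ fmin t' := by
      intro t t' h1 h2
      obtain ⟨u, hu1, hu2, hu3⟩ := fm_mem r h2
      show fm r t ≤ fm r t'
      rw [← hu3]
      exact hfle t u (le_trans h1 hu1) hu2
    have hfst : ∀ t, t ≤ m → fmin t ≤ r.s t := fun t ht => hfle t t (le_refl t) ht
    have hδlen : ∀ t, t ≤ m → ((r.conf t).2.take (r.s t - fmin t + 1)).length
        = r.s t - fmin t + 1 := by
      intro t ht
      simp only [List.length_take]
      have h1 := hfst t ht; have h2 := hf1 t ht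
      have : (r.conf t).2.length = r.s t := rfl
      omega
    have hcard' : Fintype.card (Q × Γ × (Fin (K-1) → Option Γ)) < (r.read 0 m).length := by
      omega
    obtain ⟨τ, τ', hloτ, hττ', hτ'hi, hsome, hφeq, hrlen⟩ :=
      pair_select r (Nat.zero_le m)
        (fun t => ((r.conf t).1, enc d0 (K-1) ((r.conf t).2.take (r.s t - fmin t + 1)))) hcard'
    have hφeq' : ((r.conf τ).1, enc d0 (K-1) ((r.conf τ).2.take (r.s τ - fmin τ + 1)))
        = ((r.conf τ').1, enc d0 (K-1) ((r.conf τ').2.take (r.s τ' - fmin τ' + 1))) := hφeq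
    obtain ⟨hst, henc⟩ := Prod.mk.injEq .. ▸ hφeq'
    have hτm : τ ≤ m := by omega
    have hτ'm : τ' ≤ m := by omega
    have hδeq : (r.conf τ).2.take (r.s τ - fmin τ + 1)
        = (r.conf τ').2.take (r.s τ' - fmin τ' + 1) := by
      apply enc_inj d0 ?_ ?_ ?_ ?_ henc
      · exact List.ne_nil_of_length_pos (by rw [hδlen τ hτm]; omega)
      · exact List.ne_nil_of_length_pos (by rw [hδlen τ' hτ'm]; omega)
      · have := hδlen τ hτm; have := hfK τ hτm; have := hf1 τ hτm; omega
      · have := hδlen τ' hτ'm; have := hfK τ' hτ'm; have := hf1 τ' hτ'm; omega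
    have hkv : ∀ t, τ ≤ t → t ≤ τ' → fmin τ - 1 < r.s t := by
      intro t h1 h2
      have := hfle τ t h1 (by omega)
      have := hf1 τ hτm
      omega
    have hkz : ∀ t, τ' ≤ t → t ≤ m → fmin τ' - 1 < r.s t := by
      intro t h1 h2
      have := hfle τ' t h1 h2
      have := hf1 τ' hτ'm
      omega
    have Hv : ∀ ρ' : List Γ, ReachL M (τ' - τ)
        ((r.conf τ).1, (r.conf τ).2.take (r.s τ - fmin τ + 1) ++ ρ')
        ((r.conf τ).1, (r.conf τ).2.take (r.s τ - fmin τ + 1) ++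
          (((r.conf τ').2.drop (r.s τ' - fmin τ' + 1)).take (fmin τ' - fmin τ) ++ ρ'))
        (r.read τ τ') := by
      intro ρ'
      have H := reach_replay r (le_of_lt hττ') hτ'm (fmin τ - 1) hkv ρ'
      have hidx1 : r.s τ - (fmin τ - 1) = r.s τ - fmin τ + 1 := by
        have := hf1 τ hτm; have := hfst τ hτm; omega
      have hidx2 : r.s τ' - (fmin τ - 1) = (r.s τ' - fmin τ' + 1) + (fmin τ' - fmin τ) := by
        have := hf1 τ hτm; have := hfst τ' hτ'm
        have := hfmono τ τ' (le_of_lt hττ') hτ'm; omega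
      rw [hidx1, hidx2,
        List.take_add (l := (r.conf τ').2) (i := r.s τ' - fmin τ' + 1) (j := fmin τ' - fmin τ),
        ← hδeq, ← hst, List.append_assoc] at H
      exact H
    have Hz : ∀ ρ' : List Γ, ReachL M (m - τ')
        ((r.conf τ).1, (r.conf τ).2.take (r.s τ - fmin τ + 1) ++ ρ')
        ((r.conf m).1, (r.conf m).2.take (r.s m - (fmin τ' - 1)) ++ ρ')
        (r.read τ' m) := by
      intro ρ'
      have H := reach_replay r hτ'm (le_refl m) (fmin τ' - 1) hkz ρ'
      have hidx3 : r.s τ' - (fmin τ' - 1) = r.s τ' - fmin τ' + 1 := by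
        have := hf1 τ' hτ'm; have := hfst τ' hτ'm; omega
      rw [hidx3, ← hδeq, ← hst] at H
      exact H
    have hsplitτ : ((r.conf τ).1, (r.conf τ).2.take (r.s τ - fmin τ + 1) ++
        (r.conf τ).2.drop (r.s τ - fmin τ + 1)) = r.conf τ := by
      rw [List.take_append_drop]
    refine ⟨r.read 0 τ, r.read τ τ', [], [], r.read τ' m, ?_, ?_, ?_, ?_⟩
    · rw [← hrw, read_split r (Nat.zero_le τ) hτm, read_split r (le_of_lt hττ') hτ'm]
      simp
    · simpa using le_trans hrlen (le_of_lt hcardF)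
    · simpa using read_pos r hττ' hsome
    · intro n
      have R1 : Reach M (r.conf 0)
          ((r.conf τ).1, (r.conf τ).2.take (r.s τ - fmin τ + 1) ++
            (r.conf τ).2.drop (r.s τ - fmin τ + 1)) (r.read 0 τ) := by
        have H := reach_of_run r (Nat.zero_le τ) hτm
        rw [← hsplitτ] at H
        exact ⟨_, H⟩
      have R2 := stair_pump (fun ρ => (⟨_, Hv ρ⟩ : Reach M _ _ _)) n
        ((r.conf τ).2.drop (r.s τ - fmin τ + 1))
      have R3 : Reach M
          ((r.conf τ).1, (r.conf τ).2.take (r.s τ - fmin τ + 1) ++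
            (wpow (((r.conf τ').2.drop (r.s τ' - fmin τ' + 1)).take (fmin τ' - fmin τ)) n ++
              (r.conf τ).2.drop (r.s τ - fmin τ + 1)))
          ((r.conf m).1, (r.conf m).2.take (r.s m - (fmin τ' - 1)) ++
            (wpow (((r.conf τ').2.drop (r.s τ' - fmin τ' + 1)).take (fmin τ' - fmin τ)) n ++
              (r.conf τ).2.drop (r.s τ - fmin τ + 1)))
          (r.read τ' m) := ⟨_, Hz _⟩
      have hall := (R1.trans R2).trans R3
      rw [hr0] at hall
      have hacc' := Reach.accepts' hall hrf
      rw [wpow_nil]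
      simpa [List.append_assoc] using hacc' 


/-! ### main case 2 : a big excursion exists -/

theorem excursion_case [Fintype Q] [Fintype Γ] {m : ℕ} {r : M.Run m} {w : List A}
    (hnf : M.NormalForm) (hacc : r.Accepting w) {K P : ℕ} (hK : 1 ≤ K)
    (hKcard : Fintype.card (Q × Γ × Q) = K)
    (hcardF : Fintype.card (Q × Γ × (Fin (K-1) → Option Γ)) < P)
    (hmin : ∀ n, n < m → ∀ r' : M.Run n, ¬ r'.Accepting w)
    (hexc : ∃ t u, t ≤ u ∧ u ≤ m ∧ 1 ≤ r.s u ∧ r.s u + K ≤ r.s t) :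
    ∃ u v x y z : List A, w = u ++ v ++ x ++ y ++ z ∧
      (v ++ x ++ y).length ≤ P ∧ 1 ≤ (v ++ y).length ∧
      ∀ n : ℕ, M.Accepts (u ++ wpow v n ++ x ++ wpow y n ++ z) := by
  classical
  obtain ⟨hr0, hrf, hrw⟩ := hacc
  set d0 := M.startSym with hd0
  have hs0 : r.s 0 = 1 := by simp [Run.s, hr0]
  obtain ⟨t0, u0, htu, hum, hu1, huK⟩ := hexc
  have ht0m : t0 ≤ m := le_trans htu hum
  -- c : last time ≤ t0 at height s u0
  obtain ⟨w0, hw0a, hw0b, hw0c⟩ := ivt_up (h := r.s u0) hnf r (Nat.zero_le t0) ht0m (by omega) (by omega)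
  obtain ⟨c, hc, hct0, hcmax⟩ :
      ∃ c, r.s c = r.s u0 ∧ c ≤ t0 ∧ ∀ y, c < y → y ≤ t0 → ¬ r.s y = r.s u0 :=
    ⟨Nat.findGreatest (fun y => r.s y = r.s u0) t0,
      Nat.findGreatest_spec (P := fun y => r.s y = r.s u0) hw0b hw0c,
      Nat.findGreatest_le t0,
      fun y hy1 hy2 => Nat.findGreatest_is_greatest (P := fun y => r.s y = r.s u0) hy1 hy2⟩
  -- d : first time ≥ t0 at height s u0
  obtain ⟨w1, hw1a, hw1b, hw1c⟩ := ivt_down (h := r.s u0) hnf r htu hum (by omega) (by omega)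
  have hdex : ∃ y, t0 ≤ y ∧ r.s y = r.s u0 := ⟨w1, hw1a, hw1c⟩
  obtain ⟨d, hdt0, hdspec, hdmin, hdm⟩ :
      ∃ d, t0 ≤ d ∧ r.s d = r.s u0 ∧ (∀ y, y < d → ¬ (t0 ≤ y ∧ r.s y = r.s u0)) ∧ d ≤ m :=
    ⟨Nat.find hdex, (Nat.find_spec hdex).1, (Nat.find_spec hdex).2,
      fun y hy => Nat.find_min hdex hy,
      le_trans (Nat.find_min' hdex ⟨hw1a, hw1c⟩) (le_trans hw1b hum)⟩
  have hcd : c ≤ d := le_trans hct0 hdt0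
  -- the interval [c,d] stays at height ≥ s u0
  have hint : ∀ y, c ≤ y → y ≤ d → r.s u0 ≤ r.s y := by
    intro y hy1 hy2
    by_contra hlt
    push_neg at hlt
    rcases Nat.le_total y t0 with hyt | hyt
    · obtain ⟨σ, hσ1, hσ2, hσ3⟩ := ivt_up (h := r.s u0) hnf r hyt ht0m (by omega) (by omega)
      have hyc : c < y := by
        rcases Nat.lt_or_ge c y with h | h
        · exact h
        · exfalso
          have hyc' : y = c := by omega
          rw [hyc', hc] at hlt
          omega
      exact hcmax σ (by omega) hσ2 hσ3
    · have hyd : y < d := by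
        rcases Nat.lt_or_ge y d with h | h
        · exact h
        · exfalso
          have hyd' : y = d := by omega
          rw [hyd', hdspec] at hlt
          omega
      obtain ⟨σ, hσ1, hσ2, hσ3⟩ := ivt_down (h := r.s u0) hnf r hyt (le_trans hy2 hdm) (by omega) (by omega)
      exact hdmin σ (by omega) ⟨hσ1, hσ3⟩
  -- j : a time of maximal height in [c,d]
  obtain ⟨j, hjmem, hjmax⟩ := Finset.exists_max_image (Finset.Icc c d) r.s
    ⟨c, Finset.mem_Icc.mpr ⟨le_refl c, hcd⟩⟩
  obtain ⟨hcj, hjd⟩ := Finset.mem_Icc.mp hjmem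
  have hjm : j ≤ m := le_trans hjd hdm
  have hsmax : ∀ y, c ≤ y → y ≤ d → r.s y ≤ r.s j :=
    fun y hy1 hy2 => hjmax y (Finset.mem_Icc.mpr ⟨hy1, hy2⟩)
  have hsj : r.s u0 + K ≤ r.s j := le_trans huK (hsmax t0 hct0 hdt0)
  -- lp and fp
  set lp : ℕ → ℕ := fun h => Nat.findGreatest (fun y => r.s y = h) j with hlpdef
  set fp : ℕ → ℕ := fun h => sInf {y | j ≤ y ∧ r.s y = h} with hfpdef
  have lp_spec : ∀ h, r.s j - K ≤ h → h ≤ r.s j →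
      r.s (lp h) = h ∧ c ≤ lp h ∧ lp h ≤ j := by
    intro h hA hB
    obtain ⟨y, hy1, hy2, hy3⟩ := ivt_up (h := h) hnf r hcj hjm (by omega) hB
    exact ⟨Nat.findGreatest_spec (P := fun y => r.s y = h) hy2 hy3,
      le_trans hy1 (Nat.le_findGreatest (P := fun y => r.s y = h) hy2 hy3),
      Nat.findGreatest_le j⟩
  have lp_gt : ∀ h, r.s j - K ≤ h → h ≤ r.s j → ∀ y, lp h < y → y ≤ j → h < r.s y := by
    intro h hA hB y hy1 hy2
    have hney : ¬ r.s y = h := Nat.findGreatest_is_greatest (P := fun y => r.s y = h) hy1 hy2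
    rcases Nat.lt_or_ge h (r.s y) with hlt | hge
    · exact hlt
    · exfalso
      obtain ⟨σ, hσ1, hσ2, hσ3⟩ := ivt_up (h := h) hnf r hy2 hjm (by omega) hB
      exact Nat.findGreatest_is_greatest (P := fun y => r.s y = h) (show lp h < σ by omega) hσ2 hσ3
  have fp_spec : ∀ h, r.s j - K ≤ h → h ≤ r.s j →
      r.s (fp h) = h ∧ j ≤ fp h ∧ fp h ≤ d := by
    intro h hA hB
    obtain ⟨y, hy1, hy2, hy3⟩ := ivt_down (h := h) hnf r hjd hdm hB (by omega)
    have hmem : fp h ∈ {y | j ≤ y ∧ r.s y = h} := Nat.sInf_mem ⟨y, hy1, hy3⟩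
    exact ⟨hmem.2, hmem.1, le_trans (Nat.sInf_le ⟨hy1, hy3⟩) hy2⟩
  have fp_gt : ∀ h, r.s j - K ≤ h → h ≤ r.s j → ∀ y, j ≤ y → y < fp h → h < r.s y := by
    intro h hA hB y hy1 hy2
    have hney : ¬ (j ≤ y ∧ r.s y = h) := Nat.notMem_of_lt_sInf hy2
    rcases Nat.lt_or_ge h (r.s y) with hlt | hge
    · exact hlt
    · exfalso
      have hfd : fp h ≤ d := (fp_spec h hA hB).2.2
      obtain ⟨σ, hσ1, hσ2, hσ3⟩ := ivt_down (h := h) hnf r hy1 (show y ≤ m by omega) hB hge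
      have hfσ : fp h ≤ σ := Nat.sInf_le ⟨hσ1, hσ3⟩
      omega
  -- pigeonhole on full states of the top K+1 heights
  have hcardQ : Fintype.card (Q × Γ × Q) = K := hKcard
  obtain ⟨h1, hh1, h2, hh2, hne12, hfeq0⟩ :=
    Finset.exists_ne_map_eq_of_card_lt_of_maps_to
      (s := Finset.Icc (r.s j - K) (r.s j)) (t := (Finset.univ : Finset (Q × Γ × Q)))
      (by
        rw [Nat.card_Icc, Finset.card_univ, hcardQ]
        have := hu1; have := hsj
        omega)
      (f := fun h => ((r.conf (lp h)).1,
        ((r.conf (lp h)).2.head?.getD d0, (r.conf (fp h)).1)))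
      (fun h _ => Finset.mem_univ _)
  obtain ⟨h1, h2, hin1, hin2, hlt12, hfeq⟩ :
      ∃ h1 h2, (r.s j - K ≤ h1 ∧ h1 ≤ r.s j) ∧ (r.s j - K ≤ h2 ∧ h2 ≤ r.s j) ∧ h1 < h2 ∧
        ((r.conf (lp h1)).1, ((r.conf (lp h1)).2.head?.getD d0, (r.conf (fp h1)).1))
          = ((r.conf (lp h2)).1, ((r.conf (lp h2)).2.head?.getD d0, (r.conf (fp h2)).1)) := by
    rcases lt_or_gt_of_ne hne12 with hlt | hlt
    · exact ⟨h1, h2, Finset.mem_Icc.mp hh1, Finset.mem_Icc.mp hh2, hlt, hfeq0⟩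
    · exact ⟨h2, h1, Finset.mem_Icc.mp hh2, Finset.mem_Icc.mp hh1, hlt, hfeq0.symm⟩
  obtain ⟨hq12, hrest⟩ := Prod.mk.injEq .. ▸ hfeq
  obtain ⟨hX12, hq34⟩ := Prod.mk.injEq .. ▸ hrest
  -- basic facts about the four times
  have hs1 : r.s (lp h1) = h1 := (lp_spec h1 hin1.1 hin1.2).1
  have hs2 : r.s (lp h2) = h2 := (lp_spec h2 hin2.1 hin2.2).1
  have hs3 : r.s (fp h2) = h2 := (fp_spec h2 hin2.1 hin2.2).1
  have hs4 : r.s (fp h1) = h1 := (fp_spec h1 hin1.1 hin1.2).1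
  have hlp1j : lp h1 ≤ j := (lp_spec h1 hin1.1 hin1.2).2.2
  have hlp2j : lp h2 ≤ j := (lp_spec h2 hin2.1 hin2.2).2.2
  have hlp1c : c ≤ lp h1 := (lp_spec h1 hin1.1 hin1.2).2.1
  have hlp2c : c ≤ lp h2 := (lp_spec h2 hin2.1 hin2.2).2.1
  have hfp1j : j ≤ fp h1 := (fp_spec h1 hin1.1 hin1.2).2.1
  have hfp2j : j ≤ fp h2 := (fp_spec h2 hin2.1 hin2.2).2.1
  have hfp1d : fp h1 ≤ d := (fp_spec h1 hin1.1 hin1.2).2.2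
  have hfp2d : fp h2 ≤ d := (fp_spec h2 hin2.1 hin2.2).2.2
  have hfp1m : fp h1 ≤ m := le_trans hfp1d hdm
  have hfp2m : fp h2 ≤ m := le_trans hfp2d hdm
  have hlp2m : lp h2 ≤ m := le_trans hlp2j hjm
  have hh1pos : 1 ≤ h1 := by omega
  -- ordering
  have ht12 : lp h1 < lp h2 := by
    rcases Nat.lt_or_ge (lp h1) (lp h2) with h | h
    · exact h
    · exfalso
      rcases Nat.eq_or_lt_of_le h with heq | hlt'
      · rw [heq] at hs2; omega
      · have := lp_gt h2 hin2.1 hin2.2 (lp h1) hlt' hlp1j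
        omega
  have ht34 : fp h2 < fp h1 := by
    rcases Nat.lt_or_ge (fp h2) (fp h1) with h | h
    · exact h
    · exfalso
      rcases Nat.eq_or_lt_of_le h with heq | hlt'
      · rw [← heq] at hs3; omega
      · have := fp_gt h2 hin2.1 hin2.2 (fp h1) hfp1j hlt'
        omega
  -- height bounds on the sub-intervals
  have hv_hts : ∀ t, lp h1 ≤ t → t ≤ lp h2 → h1 ≤ r.s t := by
    intro t hta htb
    rcases Nat.eq_or_lt_of_le hta with heq | hlt'
    · rw [← heq]; omega
    · exact le_of_lt (lp_gt h1 hin1.1 hin1.2 t hlt' (le_trans htb hlp2j))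
  have hx_hts : ∀ t, lp h2 ≤ t → t ≤ fp h2 → h2 ≤ r.s t := by
    intro t hta htb
    rcases Nat.le_total t j with htj | htj
    · rcases Nat.eq_or_lt_of_le hta with heq | hlt'
      · rw [← heq]; omega
      · exact le_of_lt (lp_gt h2 hin2.1 hin2.2 t hlt' htj)
    · rcases Nat.eq_or_lt_of_le htb with heq | hlt'
      · rw [heq]; omega
      · exact le_of_lt (fp_gt h2 hin2.1 hin2.2 t htj hlt')
  have hy_hts : ∀ t, fp h2 ≤ t → t ≤ fp h1 → h1 ≤ r.s t := by
    intro t hta htb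
    rcases Nat.eq_or_lt_of_le htb with heq | hlt'
    · rw [heq]; omega
    · exact le_of_lt (fp_gt h1 hin1.1 hin1.2 t (le_trans hfp2j hta) hlt')
  have h14_hts : ∀ t, lp h1 ≤ t → t ≤ fp h1 → h1 ≤ r.s t := by
    intro t hta htb
    rcases Nat.le_total t j with htj | htj
    · rcases Nat.eq_or_lt_of_le hta with heq | hlt'
      · rw [← heq]; omega
      · exact le_of_lt (lp_gt h1 hin1.1 hin1.2 t hlt' htj)
    · rcases Nat.eq_or_lt_of_le htb with heq | hlt'
      · rw [heq]; omega
      · exact le_of_lt (fp_gt h1 hin1.1 hin1.2 t htj hlt')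
  -- stack decompositions
  have hσdrop : (r.conf (lp h2)).2.drop (r.s (lp h2) - h1) = (r.conf (lp h1)).2 := by
    have := bottom_preserve hnf r h1 (le_of_lt ht12) hlp2m hv_hts
    rw [hs1, Nat.sub_self, List.drop_zero] at this
    exact this
  have hstk3 : (r.conf (fp h2)).2 = (r.conf (lp h2)).2 := by
    have := bottom_preserve hnf r h2 (le_trans hlp2j hfp2j) hfp2m hx_hts
    rw [hs2, hs3, Nat.sub_self, List.drop_zero, List.drop_zero] at this
    exact this
  have hstk4 : (r.conf (fp h1)).2 = (r.conf (lp h1)).2 := by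
    have := bottom_preserve hnf r h1 (by omega) hfp1m h14_hts
    rw [hs1, hs4, Nat.sub_self, List.drop_zero, List.drop_zero] at this
    exact this
  have hlen1 : (r.conf (lp h1)).2.length = h1 := hs1
  have hlen2 : (r.conf (lp h2)).2.length = h2 := hs2
  -- names for the stack pieces
  obtain ⟨X, σt, hσX⟩ : ∃ X σt, (r.conf (lp h1)).2 = X :: σt := by
    cases hS : (r.conf (lp h1)).2 with
    | nil => exfalso; rw [hS] at hlen1; simp at hlen1; omega
    | cons a l => exact ⟨a, l, rfl⟩
  rw [hs2] at hσdrop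
  have hstk2 : (r.conf (lp h2)).2 = (r.conf (lp h2)).2.take (h2 - h1) ++ (X :: σt) := by
    conv_lhs => rw [← List.take_append_drop (h2 - h1) (r.conf (lp h2)).2]
    rw [hσdrop, hσX]
  have hγlen : ((r.conf (lp h2)).2.take (h2 - h1)).length = h2 - h1 := by
    rw [List.length_take, hlen2]; omega
  obtain ⟨Xg, γt, hγ⟩ : ∃ a l, (r.conf (lp h2)).2.take (h2 - h1) = a :: l := by
    cases hS : (r.conf (lp h2)).2.take (h2 - h1) with
    | nil => exfalso; rw [hS] at hγlen; simp at hγlen; omega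
    | cons a l => exact ⟨a, l, rfl⟩
  have hγtlen : γt.length = h2 - h1 - 1 := by
    rw [hγ] at hγlen; simp at hγlen; omega
  have hXX : X = Xg := by
    rw [hσX, hstk2, hγ] at hX12
    simpa using hX12
  rw [← hXX] at hγ
  -- the three replayed segments
  have HKv : ∀ t, lp h1 ≤ t → t ≤ lp h2 → h1 - 1 < r.s t := by
    intro t hta htb; have := hv_hts t hta htb; omega
  have HKx : ∀ t, lp h2 ≤ t → t ≤ fp h2 → h2 - 1 < r.s t := by
    intro t hta htb; have := hx_hts t hta htb; omega
  have HKy : ∀ t, fp h2 ≤ t → t ≤ fp h1 → h1 - 1 < r.s t := by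
    intro t hta htb; have := hy_hts t hta htb; omega
  have Hv : ∀ ρ' : List Γ, ReachL M (lp h2 - lp h1)
      ((r.conf (lp h1)).1, X :: ρ')
      ((r.conf (lp h1)).1, X :: (γt ++ (X :: ρ'))) (r.read (lp h1) (lp h2)) := by
    intro ρ'
    have H := reach_replay r (le_of_lt ht12) hlp2m (h1 - 1) HKv ρ'
    rw [hs1, hs2, hσX, hstk2, hγ, ← hq12] at H
    rw [show h1 - (h1 - 1) = 1 by omega] at H
    rw [show h2 - (h1 - 1) = (X :: γt).length + 1 by
      simp only [List.length_cons]; omega] at H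
    rw [List.take_length_add_append] at H
    simpa [List.append_assoc] using H
  have Hx : ∀ ρ' : List Γ, ReachL M (fp h2 - lp h2)
      ((r.conf (lp h1)).1, X :: ρ') ((r.conf (fp h2)).1, X :: ρ')
      (r.read (lp h2) (fp h2)) := by
    intro ρ'
    have H := reach_replay r (le_trans hlp2j hfp2j) hfp2m (h2 - 1) HKx ρ'
    rw [hstk3, hs2, hs3, hstk2, hγ, ← hq12] at H
    rw [show h2 - (h2 - 1) = 1 by omega] at H
    simpa using H
  have Hy : ∀ ρ' : List Γ, ReachL M (fp h1 - fp h2)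
      ((r.conf (fp h2)).1, X :: (γt ++ (X :: ρ'))) ((r.conf (fp h2)).1, X :: ρ')
      (r.read (fp h2) (fp h1)) := by
    intro ρ'
    have H := reach_replay r (le_of_lt ht34) hfp1m (h1 - 1) HKy ρ'
    rw [hstk3, hstk4, hσX, hs3, hs4, hstk2, hγ, hq34] at H
    rw [show h2 - (h1 - 1) = (X :: γt).length + 1 by
      simp only [List.length_cons]; omega] at H
    rw [show h1 - (h1 - 1) = 1 by omega] at H
    rw [List.take_length_add_append] at H
    simpa [List.append_assoc] using H
  -- endpoint configurations
  have hconf1 : r.conf (lp h1) = ((r.conf (lp h1)).1, X :: σt) := by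
    rw [← hσX]
  have hconf4 : r.conf (fp h1) = ((r.conf (fp h2)).1, X :: σt) := by
    rw [← hq34, ← hσX, ← hstk4]
  have Hu : ReachL M (lp h1) (r.conf 0) ((r.conf (lp h1)).1, X :: σt)
      (r.read 0 (lp h1)) := by
    have H := reach_of_run r (Nat.zero_le (lp h1)) (le_trans hlp1j hjm)
    rwa [hconf1] at H
  have Hz : ReachL M (m - fp h1) ((r.conf (fp h2)).1, X :: σt) (r.conf m)
      (r.read (fp h1) m) := by
    have H := reach_of_run r hfp1m (le_refl m)
    rwa [hconf4] at H
  -- the word decomposition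
  have ht23 : lp h2 ≤ fp h2 := le_trans hlp2j hfp2j
  have hw5 : w = r.read 0 (lp h1) ++ r.read (lp h1) (lp h2) ++ r.read (lp h2) (fp h2)
      ++ r.read (fp h2) (fp h1) ++ r.read (fp h1) m := by
    rw [← hrw, read_split r (Nat.zero_le (lp h1)) (le_trans hlp1j hjm),
      read_split r (le_of_lt ht12) hlp2m,
      read_split r ht23 hfp2m,
      read_split r (le_of_lt ht34) hfp1m]
    simp [List.append_assoc]
  -- the pumping property for the pocket
  have hpump : ∀ n : ℕ, M.Accepts (r.read 0 (lp h1) ++ wpow (r.read (lp h1) (lp h2)) n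
      ++ r.read (lp h2) (fp h2) ++ wpow (r.read (fp h2) (fp h1)) n ++ r.read (fp h1) m) := by
    intro n
    have hp := pocket_pump (M := M)
      (fun ρ => ⟨_, Hv ρ⟩) (fun ρ => ⟨_, Hx ρ⟩) (fun ρ => ⟨_, Hy ρ⟩) n σt
    have hall := (Reach.trans ⟨_, Hu⟩ hp).trans ⟨_, Hz⟩
    rw [hr0] at hall
    have := Reach.accepts' hall hrf
    simpa [List.append_assoc] using this
  -- the pumped part is not empty (minimality of the run)
  have hvy : 1 ≤ (r.read (lp h1) (lp h2) ++ r.read (fp h2) (fp h1)).length := by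
    by_contra hcon
    push_neg at hcon
    have hv0 : r.read (lp h1) (lp h2) = [] := by
      have := List.length_append (as := r.read (lp h1) (lp h2)) (bs := r.read (fp h2) (fp h1))
      apply List.eq_nil_of_length_eq_zero
      omega
    have hy0 : r.read (fp h2) (fp h1) = [] := by
      have := List.length_append (as := r.read (lp h1) (lp h2)) (bs := r.read (fp h2) (fp h1))
      apply List.eq_nil_of_length_eq_zero
      omega
    have hshort := (Hu.trans (Hx σt)).trans Hz
    obtain ⟨r', hr'⟩ := accepting_of_reachL (by rwa [hr0] at hshort) hrf
    have hwshort : r.read 0 (lp h1) ++ r.read (lp h2) (fp h2) ++ r.read (fp h1) m = w := by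
      rw [hw5, hv0, hy0]; simp
    exact hmin (lp h1 + (fp h2 - lp h2) + (m - fp h1)) (by omega) r'
      (by rwa [hwshort] at hr')
  -- the enclosing window [a,b] at height r.s j - K
  have hrange0a : r.s j - K ≤ r.s j - K := le_rfl
  have hrange0b : r.s j - K ≤ r.s j := by omega
  have hsa : r.s (lp (r.s j - K)) = r.s j - K := (lp_spec _ hrange0a hrange0b).1
  have hsb : r.s (fp (r.s j - K)) = r.s j - K := (fp_spec _ hrange0a hrange0b).1
  have hac : c ≤ lp (r.s j - K) := (lp_spec _ hrange0a hrange0b).2.1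
  have haj : lp (r.s j - K) ≤ j := (lp_spec _ hrange0a hrange0b).2.2
  have hbj : j ≤ fp (r.s j - K) := (fp_spec _ hrange0a hrange0b).2.1
  have hbd : fp (r.s j - K) ≤ d := (fp_spec _ hrange0a hrange0b).2.2
  have hbm : fp (r.s j - K) ≤ m := le_trans hbd hdm
  have ha1 : lp (r.s j - K) ≤ lp h1 := by
    rcases Nat.lt_or_ge (lp h1) (lp (r.s j - K)) with hlt' | hge
    · exfalso
      have := lp_gt h1 hin1.1 hin1.2 (lp (r.s j - K)) hlt' haj
      omega
    · exact hge
  have hb4 : fp h1 ≤ fp (r.s j - K) := by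
    rcases Nat.lt_or_ge (fp (r.s j - K)) (fp h1) with hlt' | hge
    · exfalso
      have := fp_gt h1 hin1.1 hin1.2 (fp (r.s j - K)) hbj hlt'
      omega
    · exact hge
  have hreadab : (r.read (lp h1) (fp h1)).length
      ≤ (r.read (lp (r.s j - K)) (fp (r.s j - K))).length := by
    have e1 : r.read (lp (r.s j - K)) (fp (r.s j - K))
        = r.read (lp (r.s j - K)) (lp h1) ++ (r.read (lp h1) (fp h1)
          ++ r.read (fp h1) (fp (r.s j - K))) := by
      rw [read_split r ha1 (le_trans (le_of_lt (lt_trans ht12 (lt_of_le_of_lt ht23 ht34)))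
          hb4), read_split r (le_of_lt (lt_trans ht12 (lt_of_le_of_lt ht23 ht34))) hb4]
    rw [e1]
    simp only [List.length_append]
    omega
  by_cases hbig : P < (r.read (lp (r.s j - K)) (fp (r.s j - K))).length
  · -- too many letters inside the window : an exact configuration repetition
    have hab1 : lp (r.s j - K) < fp (r.s j - K) := by omega
    have hwin_lo : ∀ t, lp (r.s j - K) < t → t < fp (r.s j - K) → r.s j - K < r.s t := by
      intro t hta htb
      rcases Nat.le_total t j with htj | htj
      · exact lp_gt _ hrange0a hrange0b t hta htj
      · exact fp_gt _ hrange0a hrange0b t htj htb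
    have hwin_hi : ∀ t, lp (r.s j - K) ≤ t → t ≤ fp (r.s j - K) → r.s t ≤ r.s j := by
      intro t hta htb
      exact hsmax t (le_trans hac hta) (le_trans htb hbd)
    have hsplit_ab : P ≤ (r.read (lp (r.s j - K) + 1) (fp (r.s j - K))).length := by
      have e2 := read_split r (show lp (r.s j - K) ≤ lp (r.s j - K) + 1 by omega)
        (show lp (r.s j - K) + 1 ≤ fp (r.s j - K) by omega)
      have h1l := read_len r (lp (r.s j - K)) (lp (r.s j - K) + 1)
      have e3 : (r.read (lp (r.s j - K)) (fp (r.s j - K))).length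
          = (r.read (lp (r.s j - K)) (lp (r.s j - K) + 1)).length
            + (r.read (lp (r.s j - K) + 1) (fp (r.s j - K))).length := by
        rw [e2]; simp
      omega
    have hcard2 : Fintype.card (Q × Γ × (Fin (K-1) → Option Γ))
        < (r.read (lp (r.s j - K) + 1) (fp (r.s j - K))).length := by omega
    obtain ⟨τ, τ', hloτ, hττ', hτ'hi, hsome, hφeq2, hrlen2⟩ :=
      pair_select r (show lp (r.s j - K) + 1 ≤ fp (r.s j - K) by omega)
        (fun t => ((r.conf t).1, enc d0 (K-1) ((r.conf t).2.take (r.s t - (r.s j - K)))))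
        hcard2
    have hτa : lp (r.s j - K) < τ := by omega
    have hτ'b : τ' < fp (r.s j - K) := hτ'hi
    have hτ'm2 : τ' ≤ m := by omega
    have hδlen2 : ∀ t, lp (r.s j - K) < t → t < fp (r.s j - K) →
        ((r.conf t).2.take (r.s t - (r.s j - K))).length = r.s t - (r.s j - K) := by
      intro t hta htb
      rw [List.length_take]
      have h1' := hwin_lo t hta htb
      have h2' : (r.conf t).2.length = r.s t := rfl
      omega
    have hφeq2' : ((r.conf τ).1, enc d0 (K-1) ((r.conf τ).2.take (r.s τ - (r.s j - K))))
        = ((r.conf τ').1, enc d0 (K-1) ((r.conf τ').2.take (r.s τ' - (r.s j - K)))) := hφeq2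
    obtain ⟨hst2, henc2⟩ := Prod.mk.injEq .. ▸ hφeq2'
    have hδeq2 : (r.conf τ).2.take (r.s τ - (r.s j - K))
        = (r.conf τ').2.take (r.s τ' - (r.s j - K)) := by
      apply enc_inj d0 ?_ ?_ ?_ ?_ henc2
      · apply List.ne_nil_of_length_pos
        rw [hδlen2 τ hτa (lt_trans hττ' hτ'b)]
        have := hwin_lo τ hτa (lt_trans hττ' hτ'b)
        omega
      · apply List.ne_nil_of_length_pos
        rw [hδlen2 τ' (lt_trans hτa hττ') hτ'b]
        have := hwin_lo τ' (lt_trans hτa hττ') hτ'b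
        omega
      · rw [hδlen2 τ hτa (lt_trans hττ' hτ'b)]
        have := hwin_hi τ (by omega) (by omega)
        omega
      · rw [hδlen2 τ' (lt_trans hτa hττ') hτ'b]
        have := hwin_hi τ' (by omega) (by omega)
        omega
    have hdropeq : (r.conf τ').2.drop (r.s τ' - (r.s j - K))
        = (r.conf τ).2.drop (r.s τ - (r.s j - K)) :=
      suffix_inert r (r.s j - K) (le_of_lt hττ') hτ'm2
        (fun t ht1 ht2 => hwin_lo t (by omega) (by omega))
    have hconf2 : r.conf τ = r.conf τ' := by
      have hstk : (r.conf τ).2 = (r.conf τ').2 := by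
        conv_lhs => rw [← List.take_append_drop (r.s τ - (r.s j - K)) (r.conf τ).2]
        conv_rhs => rw [← List.take_append_drop (r.s τ' - (r.s j - K)) (r.conf τ').2]
        rw [hδeq2, hdropeq]
      exact Prod.ext hst2 hstk
    exact loop_package ⟨hr0, hrf, hrw⟩ hττ' hτ'm2 hconf2 (read_pos r hττ' hsome)
      (le_trans hrlen2 (le_of_lt hcardF))
  · -- few letters inside the window : the pocket pump itself works
    push_neg at hbig
    refine ⟨r.read 0 (lp h1), r.read (lp h1) (lp h2), r.read (lp h2) (fp h2),
      r.read (fp h2) (fp h1), r.read (fp h1) m, hw5, ?_, hvy, ?_⟩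
    · have e2 : r.read (lp h1) (fp h1) = r.read (lp h1) (lp h2) ++ (r.read (lp h2) (fp h2)
          ++ r.read (fp h2) (fp h1)) := by
        rw [read_split r (le_of_lt ht12) (le_trans ht23 (le_of_lt ht34)),
          read_split r ht23 (le_of_lt ht34)]
      have e3 : (r.read (lp h1) (fp h1)).length = (r.read (lp h1) (lp h2)).length
          + (r.read (lp h2) (fp h2)).length + (r.read (fp h2) (fp h1)).length := by
        rw [e2]; simp only [List.length_append]; omega
      simp only [List.length_append]
      omega
    · exact hpump

end PP2


open PP PP2

/-- The pumping lemma for languages of pushdown automata in normal form, with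
pumping constant `p = |Q| · (|Γ| + 1) ^ (|Q|² · |Γ|)`. -/
theorem pda_pumping_lemma {Q A Γ : Type} [Fintype Q] [Fintype Γ] {M : PDA Q A Γ}
    (hnf : M.NormalForm) :
    ∀ w : List A, M.Accepts w →
      Fintype.card Q * (Fintype.card Γ + 1) ^ (Fintype.card Q ^ 2 * Fintype.card Γ)
        < w.length →
      ∃ u v x y z : List A, w = u ++ v ++ x ++ y ++ z ∧
        (v ++ x ++ y).length ≤
          Fintype.card Q * (Fintype.card Γ + 1) ^ (Fintype.card Q ^ 2 * Fintype.card Γ) ∧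
        1 ≤ (v ++ y).length ∧
        ∀ n : ℕ, M.Accepts (u ++ wpow v n ++ x ++ wpow y n ++ z) := by
  intro w hacc hlen
  classical
  set K := Fintype.card Q ^ 2 * Fintype.card Γ with hKdef
  set P := Fintype.card Q * (Fintype.card Γ + 1) ^ K with hPdef
  have hQpos : 0 < Fintype.card Q := Fintype.card_pos_iff.mpr ⟨M.init⟩
  have hGpos : 0 < Fintype.card Γ := Fintype.card_pos_iff.mpr ⟨M.startSym⟩
  have hK : 1 ≤ K := by
    rw [hKdef]
    exact Nat.mul_pos (pow_pos hQpos 2) hGpos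
  have hKcard : Fintype.card (Q × Γ × Q) = K := by
    rw [hKdef]
    simp [Fintype.card_prod]
    ring
  have hcardF : Fintype.card (Q × Γ × (Fin (K-1) → Option Γ)) < P := by
    have hE : Fintype.card (Q × Γ × (Fin (K-1) → Option Γ))
        = Fintype.card Q * (Fintype.card Γ * (Fintype.card Γ + 1) ^ (K-1)) := by
      simp [Fintype.card_prod, Fintype.card_fun]
    have hP' : P = Fintype.card Q * ((Fintype.card Γ + 1) * (Fintype.card Γ + 1) ^ (K-1)) := by
      rw [hPdef, ← pow_succ', show K - 1 + 1 = K by omega]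
    rw [hE, hP']
    apply mul_lt_mul_of_pos_left ?_ hQpos
    apply mul_lt_mul_of_pos_right ?_ (pow_pos (by omega) _)
    omega
  obtain ⟨m, r, hracc, hmin⟩ : ∃ m, ∃ r : M.Run m, r.Accepting w ∧
      ∀ n, n < m → ∀ r' : M.Run n, ¬ r'.Accepting w := by
    have hex : ∃ m, ∃ r : M.Run m, r.Accepting w := hacc
    obtain ⟨r0, hr0⟩ := Nat.find_spec hex
    exact ⟨Nat.find hex, r0, hr0, fun n hn r' hr' => Nat.find_min hex hn ⟨r', hr'⟩⟩
  by_cases hexc : ∃ t u, t ≤ u ∧ u ≤ m ∧ 1 ≤ r.s u ∧ r.s u + K ≤ r.s t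
  · exact excursion_case hnf hracc hK hKcard hcardF hmin hexc
  · push_neg at hexc
    exact no_excursion_case hnf hracc hK hcardF hlen hexc
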